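/- Suppose u, v : ℝⁿ → ℝ are bounded continuous functions, λ > 0, J : ℝⁿ → ℝ is continuous, nonnegative, supported in B(0, r̄), p ∈ ℝⁿ, and c : ℝⁿ → ℝ is bounded continuous. Assume u is a (classical pointwise) subsolution and v a supersolution of λw(z) + J̄ - ∫J(y)e^{-y·p}·exp(w(z-y)-w(z)) dy - c(z) = 0 on ℝⁿ, where J̄ = ∫J. Then u ≤ v on ℝⁿ. -/

import Mathlib

open MeasureTheory Real Set Filter Metric
open scoped RealInnerProductSpace Topology

theorem stmt11 (n : ℕ) (J : EuclideanSpace ℝ (Fin n) → ℝ)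
    (hJc : Continuous J) (hJnn : ∀ y, 0 ≤ J y)
    (rbar : ℝ) (hsupp : Function.support J ⊆ Metric.ball (0 : EuclideanSpace ℝ (Fin n)) rbar)
    (Jbar : ℝ) (hJbar : Jbar = ∫ y, J y)
    (p : EuclideanSpace ℝ (Fin n))
    (c : EuclideanSpace ℝ (Fin n) → ℝ) (hc : Continuous c) (hcb : ∃ B, ∀ z, |c z| ≤ B)
    (lam : ℝ) (hlam : 0 < lam)
    (u v : EuclideanSpace ℝ (Fin n) → ℝ)
    (huc : Continuous u) (hub : ∃ B, ∀ z, |u z| ≤ B)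
    (hvc : Continuous v) (hvb : ∃ B, ∀ z, |v z| ≤ B)
    (hsub : ∀ z, lam * u z + Jbar -
        (∫ y, J y * Real.exp (-⟪y, p⟫) * Real.exp (u (z - y) - u z)) - c z ≤ 0)
    (hsup : ∀ z, 0 ≤ lam * v z + Jbar -
        (∫ y, J y * Real.exp (-⟪y, p⟫) * Real.exp (v (z - y) - v z)) - c z) :
    ∀ z, u z ≤ v z := by
  obtain ⟨Bu, hBu⟩ := hub
  obtain ⟨Bv, hBv⟩ := hvb
  -- compact support of J
  have hJcs : HasCompactSupport J := by
    apply IsCompact.of_isClosed_subset (isCompact_closedBall (0 : EuclideanSpace ℝ (Fin n)) rbar)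
      (isClosed_closure)
    exact closure_minimal (hsupp.trans ball_subset_closedBall) isClosed_closedBall
  have hJint : Integrable J := hJc.integrable_of_hasCompactSupport hJcs
  have hJbar_nn : 0 ≤ Jbar := by
    rw [hJbar]; exact integral_nonneg hJnn
  -- integrability of the nonlocal terms
  have key : ∀ w : EuclideanSpace ℝ (Fin n) → ℝ, Continuous w → ∀ z,
      Integrable (fun y => J y * Real.exp (-⟪y, p⟫) * Real.exp (w (z - y) - w z)) := by
    intro w hw z
    have hcont : Continuous (fun y => J y * Real.exp (-⟪y, p⟫) * Real.exp (w (z - y) - w z)) := by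
      apply Continuous.mul
      · exact hJc.mul (Real.continuous_exp.comp ((continuous_id.inner continuous_const).neg))
      · exact Real.continuous_exp.comp ((hw.comp (continuous_const.sub continuous_id)).sub
          continuous_const)
    apply hcont.integrable_of_hasCompactSupport
    apply hJcs.mono
    intro y hy
    simp only [Function.mem_support, Ne] at hy ⊢
    intro h0
    exact hy (by simp [h0])
  set f : EuclideanSpace ℝ (Fin n) → ℝ := fun z => u z - v z with hf
  have hbdd : BddAbove (Set.range f) := by
    refine ⟨Bu + Bv, ?_⟩
    rintro _ ⟨z, rfl⟩
    have h1 := abs_le.mp (hBu z)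
    have h2 := abs_le.mp (hBv z)
    simp only [hf]
    linarith [h1.2, h2.1]
  set M : ℝ := ⨆ z, f z with hM
  have hle : ∀ z, f z ≤ M := fun z => le_ciSup hbdd z
  set K : ℝ := rbar * ‖p‖ + 2 * Bv with hK
  have main : ∀ ε : ℝ, 0 < ε →
      lam * M ≤ (Real.exp ε - 1) * (Real.exp K * Jbar) + lam * ε := by
    intro ε hε
    obtain ⟨z, hz⟩ : ∃ z, M - ε < f z := by
      have hlt : M - ε < ⨆ z, f z := by rw [← hM]; linarith
      exact exists_lt_of_lt_ciSup hlt
    have Hu := hsub z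
    have Hv := hsup z
    have hIu := key u huc z
    have hIv := key v hvc z
    -- pointwise bound
    have hpt : ∀ y, J y * Real.exp (-⟪y, p⟫) * Real.exp (u (z - y) - u z) ≤
        J y * Real.exp (-⟪y, p⟫) * Real.exp (v (z - y) - v z)
          + (Real.exp ε - 1) * (Real.exp K * J y) := by
      intro y
      by_cases hy : J y = 0
      · simp [hy]
      · have hball : y ∈ Metric.ball (0 : EuclideanSpace ℝ (Fin n)) rbar := hsupp hy
        have hynorm : ‖y‖ < rbar := by simpa using mem_ball_zero_iff.mp hball
        have h1 : -⟪y, p⟫ ≤ rbar * ‖p‖ := by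
          have := abs_real_inner_le_norm y p
          have h2 : ‖y‖ * ‖p‖ ≤ rbar * ‖p‖ :=
            mul_le_mul_of_nonneg_right hynorm.le (norm_nonneg p)
          have h3 : -⟪y, p⟫ ≤ |⟪y, p⟫| := neg_le_abs _
          linarith
        have h2 : u (z - y) - u z ≤ v (z - y) - v z + ε := by
          have h3 := hle (z - y)
          simp only [hf] at h3 hz
          linarith
        have ha : Real.exp (-⟪y, p⟫) ≤ Real.exp (rbar * ‖p‖) := Real.exp_le_exp.mpr h1
        have hb : Real.exp (v (z - y) - v z) ≤ Real.exp (2 * Bv) := by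
          apply Real.exp_le_exp.mpr
          have h4 := abs_le.mp (hBv (z - y))
          have h5 := abs_le.mp (hBv z)
          linarith [h4.2, h5.1]
        have hu2 : Real.exp (u (z - y) - u z) ≤ Real.exp ε * Real.exp (v (z - y) - v z) := by
          rw [← Real.exp_add]
          exact Real.exp_le_exp.mpr (by linarith)
        have eK : Real.exp K = Real.exp (rbar * ‖p‖) * Real.exp (2 * Bv) := by
          rw [hK, Real.exp_add]
        have hJy : 0 ≤ J y := hJnn y
        have hεe : (1 : ℝ) ≤ Real.exp ε := Real.one_le_exp hε.le
        have hab : Real.exp (-⟪y, p⟫) * Real.exp (v (z - y) - v z) ≤ Real.exp K := by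
          rw [eK]
          exact mul_le_mul ha hb (Real.exp_pos _).le (Real.exp_pos _).le
        have hpos1 : (0 : ℝ) < Real.exp (-⟪y, p⟫) := Real.exp_pos _
        have hpos2 : (0 : ℝ) < Real.exp (v (z - y) - v z) := Real.exp_pos _
        nlinarith [mul_le_mul_of_nonneg_left hu2 (mul_nonneg hJy hpos1.le),
          mul_le_mul_of_nonneg_left hab (mul_nonneg (sub_nonneg.mpr hεe) hJy)]
    have hint3 : Integrable (fun y => (Real.exp ε - 1) * (Real.exp K * J y)) :=
      (hJint.const_mul (Real.exp K)).const_mul (Real.exp ε - 1)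
    have hineq : (∫ y, J y * Real.exp (-⟪y, p⟫) * Real.exp (u (z - y) - u z)) ≤
        (∫ y, J y * Real.exp (-⟪y, p⟫) * Real.exp (v (z - y) - v z))
          + (Real.exp ε - 1) * (Real.exp K * Jbar) := by
      have h6 := integral_mono hIu (hIv.add hint3) hpt
      simp only [Pi.add_apply] at h6
      rw [integral_add hIv hint3, integral_const_mul, integral_const_mul] at h6
      rw [hJbar]
      exact h6
    have h7 : lam * u z - lam * v z ≤ (Real.exp ε - 1) * (Real.exp K * Jbar) := by
      linarith
    have h8 : lam * (M - ε) ≤ lam * f z := mul_le_mul_of_nonneg_left hz.le hlam.le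
    simp only [hf] at h8
    nlinarith
  -- let ε → 0
  have hMle : lam * M ≤ 0 := by
    have hcont : Continuous (fun ε : ℝ =>
        (Real.exp ε - 1) * (Real.exp K * Jbar) + lam * ε) := by
      continuity
    have ht : Tendsto (fun ε : ℝ => (Real.exp ε - 1) * (Real.exp K * Jbar) + lam * ε)
        (𝓝[>] (0 : ℝ)) (𝓝 0) := by
      have h9 : Tendsto (fun ε : ℝ => (Real.exp ε - 1) * (Real.exp K * Jbar) + lam * ε)
          (𝓝[>] (0 : ℝ)) (𝓝 ((Real.exp 0 - 1) * (Real.exp K * Jbar) + lam * 0)) :=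
        (hcont.tendsto 0).mono_left nhdsWithin_le_nhds
      simpa using h9
    exact ge_of_tendsto ht (eventually_nhdsWithin_of_forall fun ε hε => main ε hε)
  have hM0 : M ≤ 0 := le_of_mul_le_mul_left (by simpa using hMle) hlam
  intro z
  have := hle z
  simp only [hf] at this
  linarith
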